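/- If H_0 is not closed in W = H_0 ∪ H_1 with respect to the weak topology, then for every α ∈ (0,1) there is no weakly consistent FP-test φ_n satisfying sup_{P ∈ H_0} P^n(φ_n = 1) ≤ α for all n. -/

import Mathlib

open MeasureTheory Filter Topology

open scoped BoundedContinuousFunction ENNReal NNReal

namespace Stmt8Aux

noncomputable def bcfToReal {Y : Type*} [TopologicalSpace Y] (f : Y →ᵇ ℝ≥0) : Y →ᵇ ℝ :=
  BoundedContinuousFunction.comp ((↑) : ℝ≥0 → ℝ)
    ((show Isometry ((↑) : ℝ≥0 → ℝ) from fun _ => congrFun rfl).lipschitz) f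

@[simp] lemma bcfToReal_apply {Y : Type*} [TopologicalSpace Y] (f : Y →ᵇ ℝ≥0) (y : Y) :
    bcfToReal f y = (f y : ℝ) := rfl

set_option linter.unusedSectionVars false

variable {X : Type*} [MetricSpace X] [TopologicalSpace.SeparableSpace X]
    [MeasurableSpace X] [BorelSpace X]

/-- Approximations from below to the indicator of an open set. -/
noncomputable def lowApp (V : Set X) (hV : IsOpen V) (j : ℕ) : X →ᵇ ℝ :=
  BoundedContinuousFunction.const X 1 - bcfToReal (hV.isClosed_compl.apprSeq j)

lemma lowApp_nonneg (V : Set X) (hV : IsOpen V) (j : ℕ) (y : X) : 0 ≤ lowApp V hV j y := by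
  have := HasOuterApproxClosed.apprSeq_apply_le_one hV.isClosed_compl j y
  simp only [lowApp, BoundedContinuousFunction.coe_sub, BoundedContinuousFunction.const_apply,
    Pi.sub_apply, bcfToReal_apply, sub_nonneg]
  exact_mod_cast this

lemma lowApp_le_one (V : Set X) (hV : IsOpen V) (j : ℕ) (y : X) : lowApp V hV j y ≤ 1 := by
  simp only [lowApp, BoundedContinuousFunction.coe_sub, BoundedContinuousFunction.const_apply,
    Pi.sub_apply, bcfToReal_apply]
  have : (0:ℝ) ≤ hV.isClosed_compl.apprSeq j y := (hV.isClosed_compl.apprSeq j y).coe_nonneg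
  linarith

lemma lowApp_eq_zero (V : Set X) (hV : IsOpen V) (j : ℕ) {y : X} (hy : y ∉ V) :
    lowApp V hV j y = 0 := by
  have := HasOuterApproxClosed.apprSeq_apply_eq_one hV.isClosed_compl j (hxF := hy)
  simp only [lowApp, BoundedContinuousFunction.coe_sub, BoundedContinuousFunction.const_apply,
    Pi.sub_apply, bcfToReal_apply, this, NNReal.coe_one, sub_self]

lemma lowApp_tendsto (V : Set X) (hV : IsOpen V) (y : X) :
    Tendsto (fun j => lowApp V hV j y) atTop (𝓝 (Set.indicator V 1 y)) := by
  have h := HasOuterApproxClosed.tendsto_apprSeq hV.isClosed_compl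
  rw [tendsto_pi_nhds] at h
  have h2 : Tendsto (fun j => ((hV.isClosed_compl.apprSeq j y : ℝ≥0) : ℝ)) atTop
      (𝓝 ((Set.indicator Vᶜ (fun _ => (1:ℝ≥0)) y : ℝ≥0) : ℝ)) :=
    (NNReal.continuous_coe.tendsto _).comp (h y)
  have key : (1:ℝ) - ((Set.indicator Vᶜ (fun _ => (1:ℝ≥0)) y : ℝ≥0) : ℝ)
      = Set.indicator V 1 y := by
    by_cases hy : y ∈ V
    · simp [Set.indicator_of_mem hy, Set.indicator_of_notMem (by simpa using hy :  y ∉ Vᶜ)]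
    · simp [Set.indicator_of_notMem hy, Set.indicator_of_mem (Set.mem_compl hy)]
  have := (tendsto_const_nhds (x := (1:ℝ)) (f := atTop)).sub h2
  rw [key] at this
  simpa [lowApp] using this

/-- Continuity in `P` of the integral of inclusion–exclusion-type test functions against the
`n`-fold product of `P`. -/
lemma bcf_prod_apply {Y : Type*} [TopologicalSpace Y] (t : Finset ℕ) (f : ℕ → (Y →ᵇ ℝ))
    (y : Y) : (∏ k ∈ t, f k) y = ∏ k ∈ t, f k y := by
  classical
  induction t using Finset.induction with
  | empty => simp
  | insert a s h ih =>
    rw [Finset.prod_insert h, Finset.prod_insert h, ← ih]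
    rfl

lemma continuous_II (n m : ℕ) (F : ℕ → Fin n → (X →ᵇ ℝ)) :
    Continuous fun P : ProbabilityMeasure X =>
      ∫ x : Fin n → X, ∏ k ∈ Finset.range m, (1 - ∏ i, F k i (x i))
        ∂(Measure.pi fun _ : Fin n => (P : Measure X)) := by
  classical
  have key : ∀ P : ProbabilityMeasure X,
      (∫ x : Fin n → X, ∏ k ∈ Finset.range m, (1 - ∏ i, F k i (x i))
        ∂(Measure.pi fun _ : Fin n => (P : Measure X)))
      = ∑ t ∈ (Finset.range m).powerset,
          (-1 : ℝ) ^ t.card * ∏ i, ∫ y, (∏ k ∈ t, F k i) y ∂(P : Measure X) := by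
    intro P
    letI : MeasureSpace X := ⟨(P : Measure X)⟩
    haveI : IsProbabilityMeasure (volume : Measure X) :=
      inferInstanceAs (IsProbabilityMeasure (P : Measure X))
    have hvol : (Measure.pi fun _ : Fin n => (P : Measure X))
        = (volume : Measure (Fin n → X)) := (volume_pi (ι := Fin n)).symm
    haveI : IsProbabilityMeasure (volume : Measure (Fin n → X)) := by
      rw [← hvol]; infer_instance
    have expand : ∀ x : Fin n → X, ∏ k ∈ Finset.range m, (1 - ∏ i, F k i (x i))
        = ∑ t ∈ (Finset.range m).powerset,
            (-1 : ℝ) ^ t.card * ∏ i, (∏ k ∈ t, F k i) (x i) := by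
      intro x
      rw [Finset.prod_sub (fun _ => (1 : ℝ)) (fun k => ∏ i, F k i (x i)) (Finset.range m)]
      refine Finset.sum_congr rfl fun t ht => ?_
      rw [Finset.prod_const_one, mul_one]
      congr 1
      rw [Finset.prod_comm]
      exact Finset.prod_congr rfl fun i _ => (bcf_prod_apply t (fun k => F k i) (x i)).symm
    have hint : ∀ t : Finset ℕ,
        Integrable (fun x : Fin n → X =>
          (-1 : ℝ) ^ t.card * ∏ i, (∏ k ∈ t, F k i) (x i)) volume :=
      fun t => (Integrable.fin_nat_prod
        (fun i => (∏ k ∈ t, F k i).integrable volume)).const_mul _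
    rw [hvol, integral_congr_ae (Eventually.of_forall expand),
      integral_finset_sum _ (fun t _ => hint t)]
    refine Finset.sum_congr rfl fun t _ => ?_
    rw [integral_const_mul]
    congr 1
    exact integral_fin_nat_prod_eq_prod (fun i => fun y => (∏ k ∈ t, F k i) y)
  rw [show (fun P : ProbabilityMeasure X =>
      ∫ x : Fin n → X, ∏ k ∈ Finset.range m, (1 - ∏ i, F k i (x i))
        ∂(Measure.pi fun _ : Fin n => (P : Measure X)))
    = fun P : ProbabilityMeasure X => ∑ t ∈ (Finset.range m).powerset,
        (-1 : ℝ) ^ t.card * ∏ i, ∫ y, (∏ k ∈ t, F k i) y ∂(P : Measure X)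
    from funext key]
  refine continuous_finset_sum _ fun t _ => Continuous.mul continuous_const ?_
  exact continuous_finset_prod _ fun i _ =>
    ProbabilityMeasure.continuous_integral_boundedContinuousFunction (∏ k ∈ t, F k i)

/-- Key lemma: the bound `P^n(U) ≤ α` for open `U` passes to weak limits. -/
lemma key_closed {n : ℕ} {U : Set (Fin n → X)} (hU : IsOpen U)
    {S : Set (ProbabilityMeasure X)} {α : ℝ} (hα : 0 ≤ α)
    (hS : ∀ P ∈ S, (Measure.pi fun _ : Fin n => (P : Measure X)) U ≤ ENNReal.ofReal α)
    {Q : ProbabilityMeasure X} (hQ : Q ∈ closure S) :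
    (Measure.pi fun _ : Fin n => (Q : Measure X)) U ≤ ENNReal.ofReal α := by
  classical
  haveI : SecondCountableTopology X :=
    UniformSpace.secondCountable_of_separable X
  set ν : Measure (Fin n → X) := Measure.pi fun _ : Fin n => (Q : Measure X) with hν
  haveI : IsProbabilityMeasure ν := by rw [hν]; infer_instance
  rw [ENNReal.le_ofReal_iff_toReal_le (measure_ne_top ν U) hα]
  have hSr : ∀ P ∈ S, ((Measure.pi fun _ : Fin n => (P : Measure X)) U).toReal ≤ α :=
    fun P hP => ENNReal.toReal_le_of_le_ofReal hα (hS P hP)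
  have main : ∀ ε : ℝ, 0 < ε → (ν U).toReal ≤ α + ε := by
    intro ε hε
    rcases Set.eq_empty_or_nonempty U with hUe | hUne
    · simp only [hUe, measure_empty, ENNReal.toReal_zero]; linarith
    -- countable cover of U by open boxes
    set 𝒮 : Set (Set (Fin n → X)) :=
      {B | (∃ V : Fin n → Set X, (∀ i, IsOpen (V i)) ∧ B = Set.pi Set.univ V) ∧ B ⊆ U} with h𝒮
    have hopen𝒮 : ∀ B ∈ 𝒮, IsOpen B := by
      rintro B ⟨⟨V, hV, rfl⟩, -⟩
      exact isOpen_set_pi Set.finite_univ fun i _ => hV i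
    have hUnion : ⋃₀ 𝒮 = U := by
      apply subset_antisymm (Set.sUnion_subset fun B hB => hB.2)
      intro x hx
      obtain ⟨I, u, hu, hsub⟩ := isOpen_pi_iff.mp hU x hx
      have hBsub : Set.pi Set.univ (fun i => if i ∈ I then u i else Set.univ) ⊆ U := by
        refine Set.Subset.trans ?_ hsub
        intro y hy i hiI
        have := hy i (Set.mem_univ i)
        rw [Finset.mem_coe] at hiI
        simpa only [hiI, if_true] using this
      refine ⟨Set.pi Set.univ (fun i => if i ∈ I then u i else Set.univ),
        ⟨⟨_, ?_, rfl⟩, hBsub⟩, ?_⟩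
      · intro i
        by_cases hi : i ∈ I <;> simp [hi, (hu i · |>.1)]
      · intro i _
        by_cases hi : i ∈ I <;> simp [hi, (hu i · |>.2)]
    obtain ⟨T, hTc, hTsub, hTU⟩ := TopologicalSpace.isOpen_sUnion_countable 𝒮 hopen𝒮
    rw [hUnion] at hTU
    have hTne : T.Nonempty := by
      rcases Set.eq_empty_or_nonempty T with h | h
      · exfalso
        rw [h, Set.sUnion_empty] at hTU
        exact hUne.ne_empty hTU.symm
      · exact h
    obtain ⟨B, hB⟩ := hTc.exists_eq_range hTne
    have hBmem : ∀ k, B k ∈ 𝒮 := fun k => hTsub (hB ▸ Set.mem_range_self k)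
    have hBU : (⋃ k, B k) = U := by rw [← hTU, hB, Set.sUnion_range]
    choose V hVopen hBV using fun k => (hBmem k).1
    have hBsubU : ∀ k, B k ⊆ U := fun k => (hBmem k).2
    -- choose a finite stage
    have hacc : Tendsto (fun m => (ν (Set.accumulate B m)).toReal) atTop
        (𝓝 ((ν U).toReal)) := by
      have h1 : Tendsto (fun m => ν (Set.accumulate B m)) atTop (𝓝 (ν (⋃ k, B k))) :=
        tendsto_measure_iUnion_accumulate
      rw [hBU] at h1
      exact (ENNReal.tendsto_toReal (measure_ne_top ν U)).comp h1
    obtain ⟨m, hm⟩ := (hacc.eventually (eventually_gt_nhds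
      (by linarith : (ν U).toReal - ε / 2 < (ν U).toReal))).exists
    -- approximating functions
    set f : ℕ → ℕ → Fin n → (X →ᵇ ℝ) := fun j k i => lowApp (V k i) (hVopen k i) j with hf
    have hprod0 : ∀ j k (x : Fin n → X), 0 ≤ (∏ i, f j k i (x i)) :=
      fun j k x => Finset.prod_nonneg fun i _ => lowApp_nonneg _ _ _ _
    have hprod1 : ∀ j k (x : Fin n → X), (∏ i, f j k i (x i)) ≤ 1 :=
      fun j k x => Finset.prod_le_one (fun i _ => lowApp_nonneg _ _ _ _)
        (fun i _ => lowApp_le_one _ _ _ _)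
    set g : ℕ → (Fin n → X) → ℝ :=
      fun j x => 1 - ∏ k ∈ Finset.range (m + 1), (1 - ∏ i, f j k i (x i)) with hg
    have hfac0 : ∀ j (x : Fin n → X),
        0 ≤ ∏ k ∈ Finset.range (m+1), (1 - ∏ i, f j k i (x i)) :=
      fun j x => Finset.prod_nonneg fun k _ => by linarith [hprod1 j k x]
    have hfac1 : ∀ j (x : Fin n → X),
        (∏ k ∈ Finset.range (m+1), (1 - ∏ i, f j k i (x i))) ≤ 1 :=
      fun j x => Finset.prod_le_one (fun k _ => by linarith [hprod1 j k x])
        (fun k _ => by linarith [hprod0 j k x])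
    have hg0 : ∀ j x, 0 ≤ g j x := fun j x => by
      simp only [hg]; linarith [hfac1 j x]
    have hg1 : ∀ j x, g j x ≤ 1 := fun j x => by
      simp only [hg]; linarith [hfac0 j x]
    have hgU : ∀ j x, g j x ≤ Set.indicator U 1 x := by
      intro j x
      by_cases hx : x ∈ U
      · rw [Set.indicator_of_mem hx, Pi.one_apply]; exact hg1 j x
      · rw [Set.indicator_of_notMem hx]
        have hone : ∀ k ∈ Finset.range (m+1), (1 - ∏ i, f j k i (x i)) = 1 := by
          intro k _
          have hxB : x ∉ B k := fun hc => hx (hBsubU k hc)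
          rw [hBV k] at hxB
          have hex : ∃ i, x i ∉ V k i := by
            by_contra hc; push_neg at hc
            exact hxB fun i _ => hc i
          obtain ⟨i, hi⟩ := hex
          have hz : (∏ i, f j k i (x i)) = 0 :=
            Finset.prod_eq_zero (Finset.mem_univ i) (lowApp_eq_zero _ _ _ hi)
          rw [hz, sub_zero]
        simp only [hg]
        rw [Finset.prod_congr rfl hone, Finset.prod_const_one]
        linarith
    -- pointwise limit
    set gl : (Fin n → X) → ℝ :=
      fun x => 1 - ∏ k ∈ Finset.range (m + 1),
        (1 - Set.indicator (B k) (1 : (Fin n → X) → ℝ) x) with hgl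
    have hind0 : ∀ k (x : Fin n → X),
        0 ≤ Set.indicator (B k) (1 : (Fin n → X) → ℝ) x := by
      intro k x; by_cases hx : x ∈ B k <;> simp [hx]
    have hind1 : ∀ k (x : Fin n → X),
        Set.indicator (B k) (1 : (Fin n → X) → ℝ) x ≤ 1 := by
      intro k x; by_cases hx : x ∈ B k <;> simp [hx]
    have hgl0 : ∀ x, 0 ≤ gl x := by
      intro x
      have : (∏ k ∈ Finset.range (m+1),
          (1 - Set.indicator (B k) (1 : (Fin n → X) → ℝ) x)) ≤ 1 :=
        Finset.prod_le_one (fun k _ => by linarith [hind1 k x])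
          (fun k _ => by linarith [hind0 k x])
      simp only [hgl]; linarith
    have hgl1 : ∀ x, gl x ≤ 1 := by
      intro x
      have : 0 ≤ (∏ k ∈ Finset.range (m+1),
          (1 - Set.indicator (B k) (1 : (Fin n → X) → ℝ) x)) :=
        Finset.prod_nonneg (fun k _ => by linarith [hind1 k x])
      simp only [hgl]; linarith
    have hindprod : ∀ k (x : Fin n → X),
        (∏ i, Set.indicator (V k i) (1 : X → ℝ) (x i))
          = Set.indicator (B k) (1 : (Fin n → X) → ℝ) x := by
      intro k x
      by_cases hx : x ∈ B k
      · have hxV : ∀ i, x i ∈ V k i := by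
          have h' := hx; rw [hBV k] at h'; exact fun i => h' i (Set.mem_univ i)
        rw [Set.indicator_of_mem hx, Pi.one_apply]
        have : ∀ i : Fin n, i ∈ Finset.univ →
            Set.indicator (V k i) (1 : X → ℝ) (x i) = 1 := by
          intro i _; rw [Set.indicator_of_mem (hxV i), Pi.one_apply]
        rw [Finset.prod_congr rfl this, Finset.prod_const_one]
      · rw [Set.indicator_of_notMem hx]
        have hex : ∃ i, x i ∉ V k i := by
          by_contra hc; push_neg at hc
          exact hx (by rw [hBV k]; exact fun i _ => hc i)
        obtain ⟨i, hi⟩ := hex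
        exact Finset.prod_eq_zero (Finset.mem_univ i)
          (by rw [Set.indicator_of_notMem hi])
    have hglim : ∀ x, Tendsto (fun j => g j x) atTop (𝓝 (gl x)) := by
      intro x
      refine Tendsto.const_sub _ ?_
      refine tendsto_finset_prod _ fun k _ => ?_
      refine Tendsto.const_sub _ ?_
      have h2 : Tendsto (fun j => ∏ i, f j k i (x i)) atTop
          (𝓝 (∏ i, Set.indicator (V k i) (1 : X → ℝ) (x i))) :=
        tendsto_finset_prod _ (fun i _ => lowApp_tendsto (V k i) (hVopen k i) (x i))
      rw [hindprod k x] at h2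
      exact h2
    have hgcont : ∀ j, Continuous (g j) := by
      intro j
      refine continuous_const.sub ?_
      apply continuous_finset_prod
      intro k _
      refine continuous_const.sub ?_
      exact continuous_finset_prod _ fun i _ =>
        (f j k i).continuous.comp (continuous_apply i)
    -- dominated convergence
    have hgint : ∀ (j : ℕ) (μ : Measure (Fin n → X)), IsProbabilityMeasure μ →
        Integrable (g j) μ := by
      intro j μ hμ
      refine Integrable.mono' (integrable_const 1) (hgcont j).aestronglyMeasurable
        (Filter.Eventually.of_forall fun x => ?_)
      rw [Real.norm_eq_abs, abs_le]
      exact ⟨by linarith [hg0 j x], hg1 j x⟩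
    have hglmeas : Measurable gl := by
      apply Measurable.const_sub
      apply Finset.measurable_prod
      intro k _
      exact (measurable_const.indicator (hopen𝒮 (B k) (hBmem k)).measurableSet).const_sub 1
    have hglint : Integrable gl ν := by
      refine Integrable.mono' (integrable_const 1) hglmeas.aestronglyMeasurable
        (Filter.Eventually.of_forall fun x => ?_)
      rw [Real.norm_eq_abs, abs_le]
      exact ⟨by linarith [hgl0 x], hgl1 x⟩
    have hdct : Tendsto (fun j => ∫ x, g j x ∂ν) atTop (𝓝 (∫ x, gl x ∂ν)) := by
      refine tendsto_integral_of_dominated_convergence (fun _ => (1 : ℝ))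
        (fun j => (hgcont j).aestronglyMeasurable) (integrable_const 1) ?_
        (Filter.Eventually.of_forall hglim)
      intro j
      refine Filter.Eventually.of_forall fun x => ?_
      show ‖g j x‖ ≤ (1 : ℝ)
      rw [Real.norm_eq_abs, abs_le]
      exact ⟨by linarith [hg0 j x], hg1 j x⟩
    have hAccmeas : MeasurableSet (Set.accumulate B m) := by
      rw [Set.accumulate_def]
      exact MeasurableSet.biUnion (Set.to_countable _)
        fun k _ => (hopen𝒮 (B k) (hBmem k)).measurableSet
    have hWle : (ν (Set.accumulate B m)).toReal ≤ ∫ x, gl x ∂ν := by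
      rw [← measureReal_def, ← integral_indicator_one hAccmeas]
      refine integral_mono ((integrable_const (1 : ℝ)).indicator hAccmeas) hglint ?_
      intro x
      by_cases hx : x ∈ Set.accumulate B m
      · rw [Set.indicator_of_mem hx, Pi.one_apply]
        obtain ⟨k, hk, hxB⟩ : ∃ k ≤ m, x ∈ B k := by
          rw [Set.accumulate_def] at hx
          simpa using hx
        have hz : (∏ k' ∈ Finset.range (m+1),
            (1 - Set.indicator (B k') (1 : (Fin n → X) → ℝ) x)) = 0 :=
          Finset.prod_eq_zero (Finset.mem_range.mpr (Nat.lt_succ_of_le hk))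
            (by rw [Set.indicator_of_mem hxB, Pi.one_apply, sub_self])
        simp only [hgl, hz, sub_zero, le_refl]
      · rw [Set.indicator_of_notMem hx]
        exact hgl0 x
    have hglbig : (ν U).toReal - ε < ∫ x, gl x ∂ν := by
      have := hm
      linarith
    obtain ⟨j, hj⟩ := (hdct.eventually (eventually_gt_nhds hglbig)).exists
    -- the continuous functional
    set J : ProbabilityMeasure X → ℝ := fun P =>
      ∫ x, g j x ∂(Measure.pi fun _ : Fin n => (P : Measure X)) with hJ
    have hJcont : Continuous J := by
      have hc2 := continuous_II n (m+1) (fun k i => f j k i)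
      have heq : J = fun P : ProbabilityMeasure X => 1 - ∫ x : Fin n → X,
          ∏ k ∈ Finset.range (m+1), (1 - ∏ i, f j k i (x i))
          ∂(Measure.pi fun _ : Fin n => (P : Measure X)) := by
        funext P
        haveI : IsProbabilityMeasure (Measure.pi fun _ : Fin n => (P : Measure X)) :=
          inferInstance
        have hcontp : Continuous fun x : Fin n → X =>
            ∏ k ∈ Finset.range (m+1), (1 - ∏ i, f j k i (x i)) := by
          apply continuous_finset_prod
          intro k _
          refine continuous_const.sub ?_
          exact continuous_finset_prod _ fun i _ =>
            (f j k i).continuous.comp (continuous_apply i)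
        have hintp : Integrable (fun x : Fin n → X =>
            ∏ k ∈ Finset.range (m+1), (1 - ∏ i, f j k i (x i)))
            (Measure.pi fun _ : Fin n => (P : Measure X)) := by
          refine Integrable.mono' (integrable_const 1) hcontp.aestronglyMeasurable
            (Filter.Eventually.of_forall fun x => ?_)
          rw [Real.norm_eq_abs, abs_le]
          exact ⟨by linarith [hfac0 j x], hfac1 j x⟩
        simp only [hJ, hg]
        rw [integral_sub (integrable_const 1) hintp, integral_const]
        simp
      rw [heq]
      exact continuous_const.sub hc2
    have hJle : ∀ P : ProbabilityMeasure X,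
        J P ≤ ((Measure.pi fun _ : Fin n => (P : Measure X)) U).toReal := by
      intro P
      haveI : IsProbabilityMeasure (Measure.pi fun _ : Fin n => (P : Measure X)) :=
        inferInstance
      rw [hJ, ← measureReal_def, ← integral_indicator_one hU.measurableSet]
      exact integral_mono (hgint j _ inferInstance)
        ((integrable_const (1 : ℝ)).indicator hU.measurableSet) (hgU j)
    have hQle : J Q ≤ α := by
      have hclosed : IsClosed {P : ProbabilityMeasure X | J P ≤ α} :=
        isClosed_le hJcont continuous_const
      exact closure_minimal (fun P hP => le_trans (hJle P) (hSr P hP)) hclosed hQ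
    have hJQ : (ν U).toReal - ε < J Q := hj
    linarith
  by_contra hcon
  push_neg at hcon
  have := main (((ν U).toReal - α) / 2) (by linarith)
  linarith

end Stmt8Aux

/-- If `H₀` is not closed in `W = H₀ ∪ H₁` (weak topology), then for every
`α ∈ (0,1)` there is no weakly consistent FP-test with
`sup_{P ∈ H₀} P^n(φ_n = 1) ≤ α` for all `n`. -/
theorem stmt_8 {X : Type*} [MetricSpace X] [TopologicalSpace.SeparableSpace X]
    [MeasurableSpace X] [BorelSpace X]
    (H0 H1 : Set (ProbabilityMeasure X)) (hdisj : Disjoint H0 H1)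
    (hnc : ¬ IsClosed {P : ↥(H0 ∪ H1) | (P : ProbabilityMeasure X) ∈ H0})
    (α : ℝ) (hα0 : 0 < α) (hα1 : α < 1) :
    ¬ ∃ φ : ∀ n : ℕ, (Fin n → X) → ℕ,
      (∀ n, Measurable (φ n)) ∧ (∀ n x, φ n x ≤ 2) ∧
      (∀ n, IsOpen {x : Fin n → X | φ n x = 0}) ∧
      (∀ n, IsOpen {x : Fin n → X | φ n x = 1}) ∧
      (∀ P ∈ H0, Tendsto
        (fun n => (Measure.pi fun _ : Fin n => (P : Measure X)) {x | φ n x = 0})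
        atTop (𝓝 1)) ∧
      (∀ P ∈ H1, Tendsto
        (fun n => (Measure.pi fun _ : Fin n => (P : Measure X)) {x | φ n x = 1})
        atTop (𝓝 1)) ∧
      (∀ n : ℕ, ∀ P ∈ H0,
        (Measure.pi fun _ : Fin n => (P : Measure X)) {x | φ n x = 1} ≤
          ENNReal.ofReal α) := by
  rintro ⟨φ, hmeas, hle2, hopen0, hopen1, hcons0, hcons1, hbound⟩
  -- extract a point of `H1` in the closure of `H0`
  have h1 : ∃ q : ↥(H0 ∪ H1), q ∈ closure {P : ↥(H0 ∪ H1) | (P : ProbabilityMeasure X) ∈ H0}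
      ∧ (q : ProbabilityMeasure X) ∉ H0 := by
    by_contra h
    push_neg at h
    apply hnc
    have : closure {P : ↥(H0 ∪ H1) | (P : ProbabilityMeasure X) ∈ H0}
        = {P : ↥(H0 ∪ H1) | (P : ProbabilityMeasure X) ∈ H0} :=
      subset_antisymm (fun q hq => h q hq) subset_closure
    rw [← this]
    exact isClosed_closure
  obtain ⟨q, hqcl, hqH0⟩ := h1
  set Q : ProbabilityMeasure X := (q : ProbabilityMeasure X) with hQdef
  have hQH1 : Q ∈ H1 := q.2.resolve_left hqH0
  have hQcl : Q ∈ closure H0 := by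
    have h2 : Subtype.val '' {P : ↥(H0 ∪ H1) | (P : ProbabilityMeasure X) ∈ H0} ⊆ H0 := by
      rintro _ ⟨P, hP, rfl⟩; exact hP
    have h3 : Q ∈ closure (Subtype.val '' {P : ↥(H0 ∪ H1) | (P : ProbabilityMeasure X) ∈ H0}) :=
      image_closure_subset_closure_image continuous_subtype_val
        (Set.mem_image_of_mem Subtype.val hqcl)
    exact closure_mono h2 h3
  have hn : ∀ n : ℕ, (Measure.pi fun _ : Fin n => (Q : Measure X)) {x | φ n x = 1}
      ≤ ENNReal.ofReal α :=
    fun n => Stmt8Aux.key_closed (hopen1 n) hα0.le (fun P hP => hbound n P hP) hQcl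
  have hT := hcons1 Q hQH1
  have hlt : ENNReal.ofReal α < 1 := by
    rw [← ENNReal.ofReal_one]
    exact ENNReal.ofReal_lt_ofReal_iff_of_nonneg hα0.le |>.mpr hα1
  have hev := hT.eventually (eventually_gt_nhds hlt)
  obtain ⟨n, hn'⟩ := hev.exists
  exact absurd (hn n) (not_le.mpr hn')
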